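/- Over ℚ, for every monomial w of length ≥ 1 and every monomial v (possibly empty), the element w·η(w)·v lies in the ℚ-span R of the elements h^l_m(u) − u (for monomials u and 2 ≤ m ≤ len(u)). That is, w·η(w)·v = 0 in the quotient algebra A/R. -/

import Mathlib

noncomputable section

abbrev FA (k : Type*) [Field k] (p : ℕ) := MonoidAlgebra k (FreeMonoid (Fin p))

def mon (k : Type*) [Field k] {p : ℕ} (l : List (Fin p)) : FA k p :=
  MonoidAlgebra.of k (FreeMonoid (Fin p)) (FreeMonoid.ofList l)

def etaRev (k : Type*) [Field k] {p : ℕ} : List (Fin p) → FA k p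
  | [] => 0
  | [a] => mon k [a]
  | a :: b :: l => mon k [a] * etaRev k (b :: l) - etaRev k (b :: l) * mon k [a]

def etaList (k : Type*) [Field k] {p : ℕ} (l : List (Fin p)) : FA k p :=
  etaRev k l.reverse

def etaLin (k : Type*) [Field k] (p : ℕ) : FA k p →ₗ[k] FA k p :=
  Finsupp.lift (FA k p) k (FreeMonoid (Fin p)) (fun w => etaList k (FreeMonoid.toList w)) ∘ₗ
    (MonoidAlgebra.coeffLinearEquiv k).toLinearMap

/-- The fold move `h^l_n` on a monomial (word). -/
def hl (k : Type*) [Field k] {p : ℕ} (n : ℕ) (l : List (Fin p)) : FA k p :=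
  if 2 ≤ n ∧ n ≤ l.length then
    ((-1 : k) ^ (n - 1)) •
      (mon k ((l.drop (n - 1)).take 1) * etaList k (l.take (n - 1)) * mon k (l.drop n))
  else mon k l

def hlLin (k : Type*) [Field k] (p n : ℕ) : FA k p →ₗ[k] FA k p :=
  Finsupp.lift (FA k p) k (FreeMonoid (Fin p)) (fun w => hl k n (FreeMonoid.toList w)) ∘ₗ
    (MonoidAlgebra.coeffLinearEquiv k).toLinearMap

/-- The span of the `H^l` relations `h^l_n(w) - w`. -/
def Rspan (k : Type*) [Field k] (p : ℕ) : Submodule k (FA k p) :=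
  Submodule.span k
    {x | ∃ (l : List (Fin p)) (n : ℕ), 2 ≤ n ∧ n ≤ l.length ∧ x = hl k n l - mon k l}

/-! ### Auxiliary lemmas -/

variable {p : ℕ}

lemma mon_append (l1 l2 : List (Fin p)) :
    mon ℚ (l1 ++ l2) = mon ℚ l1 * mon ℚ l2 := by
  simp [mon, FreeMonoid.ofList_append, map_mul]

lemma mon_def (l : List (Fin p)) :
    mon ℚ l = MonoidAlgebra.single (FreeMonoid.ofList l) (1 : ℚ) := by
  simp [mon, MonoidAlgebra.of_apply]

lemma single_eq (a : FreeMonoid (Fin p)) (b : ℚ) :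
    (MonoidAlgebra.single a b : FA ℚ p) = b • mon ℚ (FreeMonoid.toList a) := by
  rw [mon_def, FreeMonoid.ofList_toList, MonoidAlgebra.smul_single, smul_eq_mul, mul_one]

lemma etaLin_mon (l : List (Fin p)) : etaLin ℚ p (mon ℚ l) = etaList ℚ l := by
  rw [mon_def]
  unfold etaLin
  erw [LinearMap.comp_apply, LinearEquiv.coe_coe]
  have e : (MonoidAlgebra.coeffLinearEquiv ℚ) (MonoidAlgebra.single (FreeMonoid.ofList l) (1 : ℚ)) =
      Finsupp.single (FreeMonoid.ofList l) (1 : ℚ) := rfl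
  erw [e, Finsupp.lift_apply, Finsupp.sum_single_index (by simp), one_smul,
    FreeMonoid.toList_ofList]

lemma hlLin_mon (n : ℕ) (l : List (Fin p)) : hlLin ℚ p n (mon ℚ l) = hl ℚ n l := by
  rw [mon_def]
  unfold hlLin
  erw [LinearMap.comp_apply, LinearEquiv.coe_coe]
  have e : (MonoidAlgebra.coeffLinearEquiv ℚ) (MonoidAlgebra.single (FreeMonoid.ofList l) (1 : ℚ)) =
      Finsupp.single (FreeMonoid.ofList l) (1 : ℚ) := rfl
  erw [e, Finsupp.lift_apply, Finsupp.sum_single_index (by simp), one_smul,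
    FreeMonoid.toList_ofList]

lemma etaList_snoc (c : Fin p) {u : List (Fin p)} (hu : u ≠ []) :
    etaList ℚ (u ++ [c]) = mon ℚ [c] * etaList ℚ u - etaList ℚ u * mon ℚ [c] := by
  obtain ⟨b, l, h⟩ : ∃ b l, u.reverse = b :: l := by
    cases h : u.reverse with
    | nil =>
      exfalso; apply hu
      have := congrArg List.reverse h
      simpa using this
    | cons b l => exact ⟨b, l, rfl⟩
  unfold etaList
  rw [List.reverse_append, h]
  rfl

/-- Homogeneous component of degree `m` spanned by words of length `m`. -/
def Ds (m : ℕ) : Submodule ℚ (FA ℚ p) :=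
  Submodule.span ℚ {x | ∃ u : List (Fin p), u.length = m ∧ x = mon ℚ u}

lemma mon_mem_Ds (u : List (Fin p)) : mon ℚ u ∈ Ds (p := p) u.length :=
  Submodule.subset_span ⟨u, rfl, rfl⟩

lemma mon_mul_mem_Ds {m : ℕ} (t : List (Fin p)) {X : FA ℚ p} (hX : X ∈ Ds m) :
    mon ℚ t * X ∈ Ds (p := p) (t.length + m) := by
  induction hX using Submodule.span_induction with
  | mem x hx =>
    obtain ⟨u, hu, rfl⟩ := hx
    rw [← mon_append]
    exact Submodule.subset_span ⟨t ++ u, by simp [hu], rfl⟩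
  | zero => simp
  | add x y hx hy ihx ihy => rw [mul_add]; exact add_mem ihx ihy
  | smul a x hx ihx => rw [mul_smul_comm]; exact Submodule.smul_mem _ _ ihx

lemma mul_mon_mem_Ds {m : ℕ} (t : List (Fin p)) {X : FA ℚ p} (hX : X ∈ Ds m) :
    X * mon ℚ t ∈ Ds (p := p) (m + t.length) := by
  induction hX using Submodule.span_induction with
  | mem x hx =>
    obtain ⟨u, hu, rfl⟩ := hx
    rw [← mon_append]
    exact Submodule.subset_span ⟨u ++ t, by simp [hu], rfl⟩
  | zero => simp
  | add x y hx hy ihx ihy => rw [add_mul]; exact add_mem ihx ihy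
  | smul a x hx ihx => rw [smul_mul_assoc]; exact Submodule.smul_mem _ _ ihx

lemma etaRev_mem_Ds (l : List (Fin p)) : etaRev ℚ l ∈ Ds (p := p) l.length := by
  induction l with
  | nil => simp [etaRev]
  | cons a tl ih =>
    cases tl with
    | nil =>
      show mon ℚ [a] ∈ Ds (p := p) 1
      exact mon_mem_Ds [a]
    | cons b l' =>
      show mon ℚ [a] * etaRev ℚ (b :: l') - etaRev ℚ (b :: l') * mon ℚ [a] ∈ _
      have h1 := mon_mul_mem_Ds (m := (b :: l').length) [a] ih
      have h2 := mul_mon_mem_Ds (m := (b :: l').length) [a] ih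
      simp only [List.length_cons, List.length_nil, Nat.zero_add] at h1 h2 ⊢
      have e1 : 1 + (l'.length + 1) = l'.length + 1 + 1 := by omega
      rw [e1] at h1
      exact sub_mem h1 h2

lemma etaList_mem_Ds (l : List (Fin p)) : etaList ℚ l ∈ Ds (p := p) l.length := by
  have := etaRev_mem_Ds (p := p) l.reverse
  simpa [etaList] using this

lemma hl_eq {u : List (Fin p)} (hu : u ≠ []) (c : Fin p) (z : List (Fin p)) :
    hl ℚ (u.length + 1) (u ++ c :: z) =
      ((-1 : ℚ) ^ u.length) • (mon ℚ [c] * etaList ℚ u * mon ℚ z) := by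
  have hlen : 1 ≤ u.length := by
    cases u with
    | nil => exact absurd rfl hu
    | cons _ _ => simp
  have hcond : 2 ≤ u.length + 1 ∧ u.length + 1 ≤ (u ++ c :: z).length := by
    constructor
    · omega
    · simp
  unfold hl
  rw [if_pos hcond]
  have h1 : u.length + 1 - 1 = u.length := by omega
  have h2 : (u ++ c :: z).drop u.length = c :: z := List.drop_left
  have h3 : (u ++ c :: z).take u.length = u := List.take_left
  have h4 : (u ++ c :: z).drop (u.length + 1) = z := by
    have : u ++ c :: z = (u ++ [c]) ++ z := by simp
    rw [this]
    have hlen' : (u ++ [c]).length = u.length + 1 := by simp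
    rw [← hlen']
    exact List.drop_left
  rw [h1, h2, h3, h4]
  rfl

lemma hlLin_hom {m : ℕ} (hm : 1 ≤ m) {X : FA ℚ p} (hX : X ∈ Ds m) (c : Fin p)
    (Z : FA ℚ p) :
    hlLin ℚ p (m + 1) (X * (mon ℚ [c] * Z)) =
      ((-1 : ℚ) ^ m) • (mon ℚ [c] * (etaLin ℚ p X * Z)) := by
  induction hX using Submodule.span_induction generalizing Z with
  | mem x hx =>
    obtain ⟨u, hu, rfl⟩ := hx
    have hune : u ≠ [] := by
      intro h; subst h; simp at hu; omega
    induction Z using MonoidAlgebra.induction_linear with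
    | zero => simp
    | add f g hf hg =>
      rw [mul_add, mul_add, mul_add, mul_add, map_add, hf, hg, smul_add]
    | single a b =>
      rw [single_eq]
      simp only [mul_smul_comm, map_smul]
      have core : hlLin ℚ p (m + 1)
            (mon ℚ u * (mon ℚ [c] * mon ℚ (FreeMonoid.toList a))) =
          ((-1 : ℚ) ^ m) •
            (mon ℚ [c] * (etaLin ℚ p (mon ℚ u) * mon ℚ (FreeMonoid.toList a))) := by
        rw [← mon_append]
        have hc : [c] ++ FreeMonoid.toList a = c :: FreeMonoid.toList a := rfl
        rw [hc, ← mon_append, hlLin_mon, ← hu, hl_eq hune, etaLin_mon, mul_assoc]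
      rw [core, smul_smul, smul_smul, mul_comm]
  | zero => simp
  | add x y hx hy ihx ihy =>
    rw [add_mul, map_add, map_add, add_mul, mul_add, smul_add, ihx, ihy]
  | smul a x hx ihx =>
    rw [smul_mul_assoc, map_smul, map_smul, smul_mul_assoc, mul_smul_comm,
      smul_comm ((-1 : ℚ) ^ m) a, ihx]

lemma etaLin_mul_letter {m : ℕ} (hm : 1 ≤ m) {X : FA ℚ p} (hX : X ∈ Ds m) (c : Fin p) :
    etaLin ℚ p (X * mon ℚ [c]) =
      mon ℚ [c] * etaLin ℚ p X - etaLin ℚ p X * mon ℚ [c] := by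
  induction hX using Submodule.span_induction with
  | mem x hx =>
    obtain ⟨u, hu, rfl⟩ := hx
    have hune : u ≠ [] := by intro h; subst h; simp at hu; omega
    rw [← mon_append, etaLin_mon, etaLin_mon, etaList_snoc c hune]
  | zero => simp
  | add x y hx hy ihx ihy =>
    rw [add_mul, map_add, map_add, mul_add, add_mul, ihx, ihy]
    abel
  | smul a x hx ihx =>
    rw [smul_mul_assoc, map_smul, map_smul, mul_smul_comm, smul_mul_assoc, ihx, smul_sub]

lemma key {r : List (Fin p)} (hr : r ≠ []) {t : List (Fin p)} (ht : t ≠ []) :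
    etaLin ℚ p (mon ℚ t * etaRev ℚ r) =
      ((-1 : ℚ) ^ (r.length + 1)) •
        (etaRev ℚ r * etaList ℚ t - etaList ℚ t * etaRev ℚ r) := by
  induction r generalizing t with
  | nil => exact absurd rfl hr
  | cons a tl ih =>
    cases tl with
    | nil =>
      show etaLin ℚ p (mon ℚ t * mon ℚ [a]) =
        ((-1 : ℚ) ^ (1 + 1)) • (mon ℚ [a] * etaList ℚ t - etaList ℚ t * mon ℚ [a])
      rw [← mon_append, etaLin_mon, etaList_snoc a ht]
      norm_num
    | cons b l' =>
      have htl : (b :: l') ≠ [] := by simp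
      have hE : etaRev ℚ (a :: b :: l') =
          mon ℚ [a] * etaRev ℚ (b :: l') - etaRev ℚ (b :: l') * mon ℚ [a] := rfl
      set E := etaRev ℚ (b :: l') with hEdef
      have hta : t ++ [a] ≠ [] := by simp
      have step1 : etaLin ℚ p (mon ℚ t * (mon ℚ [a] * E)) =
          ((-1 : ℚ) ^ ((b :: l').length + 1)) •
            (E * etaList ℚ (t ++ [a]) - etaList ℚ (t ++ [a]) * E) := by
        rw [← mul_assoc, ← mon_append]
        exact ih htl hta
      have hXmem : mon ℚ t * E ∈ Ds (p := p) (t.length + (b :: l').length) :=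
        mon_mul_mem_Ds t (etaRev_mem_Ds (b :: l'))
      have hm1 : 1 ≤ t.length + (b :: l').length := by simp; omega
      have step2 : etaLin ℚ p (mon ℚ t * E * mon ℚ [a]) =
          mon ℚ [a] * etaLin ℚ p (mon ℚ t * E) -
            etaLin ℚ p (mon ℚ t * E) * mon ℚ [a] :=
        etaLin_mul_letter hm1 hXmem a
      have step3 : etaLin ℚ p (mon ℚ t * E) =
          ((-1 : ℚ) ^ ((b :: l').length + 1)) •
            (E * etaList ℚ t - etaList ℚ t * E) := ih htl ht
      rw [hE, mul_sub, map_sub, step1, ← mul_assoc, step2, step3,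
        etaList_snoc a ht]
      have hpow : ((-1 : ℚ) ^ ((a :: b :: l').length + 1)) =
          -((-1 : ℚ) ^ ((b :: l').length + 1)) := by
        simp [pow_succ]
      rw [hpow]
      set S := ((-1 : ℚ) ^ ((b :: l').length + 1))
      set A := mon ℚ [a]
      set Tt := etaList ℚ t
      simp only [mul_sub, sub_mul, smul_sub, mul_smul_comm, smul_mul_assoc, mul_assoc,
        neg_smul, smul_neg]
      module

lemma hl_sub_mem (n : ℕ) (X : FA ℚ p) : hlLin ℚ p n X - X ∈ Rspan ℚ p := by
  induction X using MonoidAlgebra.induction_linear with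
  | zero => simp [Rspan]
  | add f g hf hg =>
    have := add_mem hf hg
    rw [map_add]
    convert this using 1
    exact add_sub_add_comm _ _ _ _
  | single a b =>
    rw [single_eq, map_smul, ← smul_sub]
    apply Submodule.smul_mem
    rw [hlLin_mon]
    by_cases h : 2 ≤ n ∧ n ≤ (FreeMonoid.toList a).length
    · exact Submodule.subset_span ⟨FreeMonoid.toList a, n, h.1, h.2, rfl⟩
    · have heq : hl ℚ n (FreeMonoid.toList a) = mon ℚ (FreeMonoid.toList a) := by
        unfold hl; rw [if_neg h]
      rw [heq, sub_self]
      exact zero_mem _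

/-- The Y relations are trivial: w·η(w)·v ∈ R for every monomial w of length ≥ 1
and every (possibly empty) monomial v, over ℚ. -/
theorem y_trivial {p : ℕ} (w v : List (Fin p)) (hw : 1 ≤ w.length) :
    mon ℚ w * etaList ℚ w * mon ℚ v ∈ Rspan ℚ p := by
  obtain ⟨w', a, rfl⟩ : ∃ w' a, w = w' ++ [a] := by
    rcases List.eq_nil_or_concat w with h | ⟨w', a, h⟩
    · subst h; simp at hw
    · exact ⟨w', a, by simpa [List.concat_eq_append] using h⟩
  by_cases hw' : w' = []
  · subst hw'
    simp only [List.nil_append]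
    have hEa : etaList ℚ [a] = mon ℚ [a] := rfl
    have hX : mon ℚ [a] ∈ Ds (p := p) 1 := mon_mem_Ds [a]
    have c : hlLin ℚ p 2 (mon ℚ [a] * (mon ℚ [a] * mon ℚ v)) =
        ((-1 : ℚ) ^ 1) • (mon ℚ [a] * (etaLin ℚ p (mon ℚ [a]) * mon ℚ v)) :=
      hlLin_hom le_rfl hX a (mon ℚ v)
    rw [etaLin_mon, hEa] at c
    have h := hl_sub_mem (p := p) 2 (mon ℚ [a] * (mon ℚ [a] * mon ℚ v))
    have hbig : hlLin ℚ p 2 (mon ℚ [a] * (mon ℚ [a] * mon ℚ v)) -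
        mon ℚ [a] * (mon ℚ [a] * mon ℚ v) =
        (-2 : ℚ) • (mon ℚ [a] * etaList ℚ [a] * mon ℚ v) := by
      rw [c, hEa, mul_assoc]
      module
    rw [hbig] at h
    have h2 := Submodule.smul_mem (Rspan ℚ p) (-(1 : ℚ)/2) h
    rw [smul_smul] at h2
    norm_num at h2
    exact h2
  · have hw'' : w' ≠ [] := hw'
    have hd1 : 1 ≤ w'.length := by
      cases w' with
      | nil => exact absurd rfl hw''
      | cons _ _ => simp
    have hane : w' ++ [a] ≠ ([] : List (Fin p)) := by simp
    have c1 : hlLin ℚ p (w'.length + 1)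
        (mon ℚ w' * (mon ℚ [a] * (etaList ℚ (w' ++ [a]) * mon ℚ v))) =
        ((-1 : ℚ) ^ w'.length) •
          (mon ℚ [a] * (etaLin ℚ p (mon ℚ w') * (etaList ℚ (w' ++ [a]) * mon ℚ v))) :=
      hlLin_hom hd1 (mon_mem_Ds w') a _
    rw [etaLin_mon] at c1
    have hX2 : mon ℚ (w' ++ [a]) ∈ Ds (p := p) (w'.length + 1) := by
      have := mon_mem_Ds (p := p) (w' ++ [a])
      simpa using this
    have c2 : hlLin ℚ p (w'.length + 1 + 1)
        (mon ℚ (w' ++ [a]) * (mon ℚ [a] * (etaList ℚ w' * mon ℚ v))) =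
        ((-1 : ℚ) ^ (w'.length + 1)) •
          (mon ℚ [a] * (etaLin ℚ p (mon ℚ (w' ++ [a])) * (etaList ℚ w' * mon ℚ v))) :=
      hlLin_hom (by omega) hX2 a _
    rw [etaLin_mon] at c2
    have hX3 : mon ℚ (w' ++ [a]) * etaList ℚ w' ∈
        Ds (p := p) (w'.length + 1 + w'.length) := by
      have := mon_mul_mem_Ds (w' ++ [a]) (etaList_mem_Ds (p := p) w')
      have he : (w' ++ [a]).length + w'.length = w'.length + 1 + w'.length := by simp
      rwa [he] at this
    have c3 : hlLin ℚ p (w'.length + 1 + w'.length + 1)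
        ((mon ℚ (w' ++ [a]) * etaList ℚ w') * (mon ℚ [a] * mon ℚ v)) =
        ((-1 : ℚ) ^ (w'.length + 1 + w'.length)) •
          (mon ℚ [a] * (etaLin ℚ p (mon ℚ (w' ++ [a]) * etaList ℚ w') * mon ℚ v)) :=
      hlLin_hom (by omega) hX3 a _
    have hodd : ((-1 : ℚ) ^ (w'.length + 1 + w'.length)) = -((-1 : ℚ) ^ (2 * w'.length)) := by
      rw [show w'.length + 1 + w'.length = 2 * w'.length + 1 by omega, pow_succ]
      ring
    have heven : ((-1 : ℚ) ^ (2 * w'.length)) = 1 := by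
      rw [pow_mul]
      norm_num
    rw [hodd, heven] at c3
    have hkey : etaLin ℚ p (mon ℚ (w' ++ [a]) * etaList ℚ w') =
        ((-1 : ℚ) ^ (w'.length + 1)) •
          (etaList ℚ w' * etaList ℚ (w' ++ [a]) -
            etaList ℚ (w' ++ [a]) * etaList ℚ w') := by
      have hrne : w'.reverse ≠ ([] : List (Fin p)) := by simpa using hw''
      have h := key (p := p) hrne (t := w' ++ [a]) hane
      have hrev : etaRev ℚ w'.reverse = etaList ℚ w' := rfl
      rw [hrev, List.length_reverse] at h
      exact h
    rw [hkey] at c3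
    have hsnoc : etaList ℚ (w' ++ [a]) =
        mon ℚ [a] * etaList ℚ w' - etaList ℚ w' * mon ℚ [a] := etaList_snoc a hw''
    have h1 := hl_sub_mem (p := p) (w'.length + 1)
      (mon ℚ w' * (mon ℚ [a] * (etaList ℚ (w' ++ [a]) * mon ℚ v)))
    have h2 := hl_sub_mem (p := p) (w'.length + 1 + 1)
      (mon ℚ (w' ++ [a]) * (mon ℚ [a] * (etaList ℚ w' * mon ℚ v)))
    have h3 := hl_sub_mem (p := p) (w'.length + 1 + w'.length + 1)
      ((mon ℚ (w' ++ [a]) * etaList ℚ w') * (mon ℚ [a] * mon ℚ v))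
    have hmem := sub_mem (add_mem h1 h2) h3
    rw [c1, c2, c3] at hmem
    have hbig :
        ((-1 : ℚ) ^ w'.length) •
            (mon ℚ [a] * (etaList ℚ w' * (etaList ℚ (w' ++ [a]) * mon ℚ v))) -
          mon ℚ w' * (mon ℚ [a] * (etaList ℚ (w' ++ [a]) * mon ℚ v)) +
        (((-1 : ℚ) ^ (w'.length + 1)) •
            (mon ℚ [a] * (etaList ℚ (w' ++ [a]) * (etaList ℚ w' * mon ℚ v))) -
          mon ℚ (w' ++ [a]) * (mon ℚ [a] * (etaList ℚ w' * mon ℚ v))) -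
        ((-1 : ℚ)  •
            (mon ℚ [a] * ((((-1 : ℚ) ^ (w'.length + 1)) •
              (etaList ℚ w' * etaList ℚ (w' ++ [a]) -
                etaList ℚ (w' ++ [a]) * etaList ℚ w')) * mon ℚ v)) -
          (mon ℚ (w' ++ [a]) * etaList ℚ w') * (mon ℚ [a] * mon ℚ v)) =
        (-2 : ℚ) • (mon ℚ (w' ++ [a]) * etaList ℚ (w' ++ [a]) * mon ℚ v) := by
      rw [hsnoc, mon_append]
      simp only [mul_sub, sub_mul, smul_sub, smul_add, mul_smul_comm, smul_mul_assoc,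
        mul_assoc, neg_smul, one_smul, smul_neg]
      module
    rw [hbig] at hmem
    have hfin := Submodule.smul_mem (Rspan ℚ p) (-(1 : ℚ)/2) hmem
    rw [smul_smul] at hfin
    norm_num at hfin
    exact hfin
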